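/- Let d ≥ 1, let w ∈ ℝ^d, let f : ℝ^d → ℝ be the linear model f(x) = ⟨w, x⟩, and let x₀ ∈ ℝ^d. Then the unique minimizer over w′ ∈ ℝ^d of the multiplicative-noise gradient-matching objective L(w′) = ∫_0^1 ‖ (x₀ ⊙ ∇f(α·x₀)) − w′ ‖² dα is the vector with components w′_i = w_i · x₀_i, i.e. w ⊙ x₀ rather than w. (Multiplicative continuous noise methods such as Integrated Gradients and Gradient × Input do not recover the weights of an underlying linear model; they recover the weights multiplied componentwise by the input.) -/

import Mathlib

open MeasureTheory

/-- Multiplicative continuous noise methods (Integrated Gradients, Gradient × Input)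
do not recover the weights of an underlying linear model `f(x) = ⟨w, x⟩`: the unique
minimizer of `L(w′) = ∫₀¹ ‖(x₀ ⊙ ∇f(α·x₀)) − w′‖² dα` is `w ⊙ x₀`, not `w`. -/
theorem multiplicative_noise_recovers_weight_times_input
    (d : ℕ) (hd : 1 ≤ d)
    (w : EuclideanSpace ℝ (Fin d))
    (f : EuclideanSpace ℝ (Fin d) → ℝ)
    (hf : f = fun x => inner ℝ w x)
    (x₀ : EuclideanSpace ℝ (Fin d)) :
    let wx : EuclideanSpace ℝ (Fin d) := WithLp.toLp 2 (fun i => w i * x₀ i)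
    let L : EuclideanSpace ℝ (Fin d) → ℝ := fun w' =>
      ∫ α in (0:ℝ)..1,
        ‖(show EuclideanSpace ℝ (Fin d) from WithLp.toLp 2 (fun i => x₀ i * gradient f (α • x₀) i)) - w'‖ ^ 2
    (∀ w', L wx ≤ L w') ∧ (∀ w', L w' = L wx → w' = wx) := by
  intro wx L
  have hgrad : ∀ y, gradient f y = w := by
    intro y
    have h : HasGradientAt f w y := by
      rw [hf, hasGradientAt_iff_hasFDerivAt]
      exact (InnerProductSpace.toDual ℝ (EuclideanSpace ℝ (Fin d)) w).hasFDerivAt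
    exact h.gradient
  have hL : ∀ w', L w' = ‖wx - w'‖ ^ 2 := by
    intro w'
    have hpt : (show EuclideanSpace ℝ (Fin d) from
        WithLp.toLp 2 (fun i => x₀ i * gradient f ((0:ℝ) • x₀) i)) = wx := by
      ext i
      simp [hgrad, wx, mul_comm]
    have : L w' = ∫ α in (0:ℝ)..1, ‖wx - w'‖ ^ 2 := by
      simp only [L]
      congr 1
      funext α
      congr 2
      ext i
      simp [hgrad, wx, mul_comm]
    simp [this]
  constructor
  · intro w'
    rw [hL, hL]
    simp
  · intro w' hw'
    rw [hL, hL] at hw'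
    have h0 : ‖wx - w'‖ ^ 2 = 0 := by simpa using hw'
    have h1 : wx - w' = 0 :=
      norm_eq_zero.mp ((pow_eq_zero_iff (two_ne_zero)).mp h0)
    exact (sub_eq_zero.mp h1).symm
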